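/- Let a_1,…,a_n be real numbers with a_i > 1 and ∑_{i=1}^n 1/a_i = 1, and for t > 0 set k_i(t) = ⌊t/a_i⌋ and N(t) = (k_1(t) + ⋯ + k_n(t))! / (k_1(t)! ⋯ k_n(t)!). Then as t → ∞, log N(t) = t · ∑_{i=1}^n (log a_i)/a_i − ((n−1)/2) · log t + O(1); that is, there is a constant C such that |log N(t) − t·∑_{i=1}^n (log a_i)/a_i + ((n−1)/2)·log t| ≤ C for all sufficiently large t. -/

import Mathlib

set_option maxHeartbeats 1000000

open Real Finset

lemma stirlingE : ∃ Cs : ℝ, ∀ m : ℕ, 1 ≤ m →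
    |Real.log (m.factorial) - ((m : ℝ) * Real.log m - m + Real.log m / 2)| ≤ Cs := by
  obtain ⟨c, hc⟩ : ∃ c : ℝ, ∀ n : ℕ, c ≤ Real.log (Stirling.stirlingSeq (n + 1)) :=
    ⟨_, Stirling.log_stirlingSeq_bounded_by_constant⟩
  refine ⟨max |c| |Real.log (Stirling.stirlingSeq 1)| + |Real.log 2 / 2|, fun m hm => ?_⟩
  obtain ⟨k, rfl⟩ := Nat.exists_eq_add_of_le hm
  set m := 1 + k with hmdef
  have hm0 : (0:ℝ) < m := by positivity
  have hform := Stirling.log_stirlingSeq_formula m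
  have h1 : Real.log (m.factorial) - ((m : ℝ) * Real.log m - m + Real.log m / 2)
      = Real.log (Stirling.stirlingSeq m) + Real.log 2 / 2 := by
    have h2 : Real.log (2 * (m:ℝ)) = Real.log 2 + Real.log m := by
      rw [Real.log_mul (by norm_num) (ne_of_gt hm0)]
    have h3 : Real.log ((m:ℝ) / Real.exp 1) = Real.log m - 1 := by
      rw [Real.log_div (ne_of_gt hm0) (Real.exp_ne_zero 1), Real.log_exp]
    rw [hform, h2, h3]; ring
  rw [h1]
  have hb1 : Real.log (Stirling.stirlingSeq m) ≤ Real.log (Stirling.stirlingSeq 1) := by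
    have := Stirling.log_stirlingSeq'_antitone (Nat.zero_le k)
    simpa [hmdef, Nat.add_comm, Function.comp] using this
  have hb2 : c ≤ Real.log (Stirling.stirlingSeq m) := by
    have := hc k; rwa [show k + 1 = m by omega] at this
  have : |Real.log (Stirling.stirlingSeq m)| ≤ max |c| |Real.log (Stirling.stirlingSeq 1)| := by
    rw [abs_le]
    exact ⟨le_trans (neg_le_neg (le_max_left |c| _)) (le_trans (neg_abs_le c) hb2),
      le_trans (le_trans hb1 (le_abs_self _)) (le_max_right _ _)⟩
  calc |Real.log (Stirling.stirlingSeq m) + Real.log 2 / 2|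
      ≤ |Real.log (Stirling.stirlingSeq m)| + |Real.log 2 / 2| := abs_add_le _ _
    _ ≤ _ := by gcongr

lemma log_sub_log_le {u v : ℝ} (hu : 0 < u) (huv : u ≤ v) :
    Real.log v - Real.log u ≤ (v - u) / u := by
  have hv : 0 < v := lt_of_lt_of_le hu huv
  have h := Real.log_le_sub_one_of_pos (div_pos hv hu)
  rw [Real.log_div (ne_of_gt hv) (ne_of_gt hu)] at h
  have h2 : v / u - 1 = (v - u) / u := by field_simp
  linarith

/-- For reals `a i > 1` with `∑ 1/a i = 1`, letting `k i (t) = ⌊t/a i⌋` and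
`N(t) = (∑ k i)!/∏ (k i)!`, one has
`log N(t) = t·∑ (log a i)/a i − ((n−1)/2)·log t + O(1)` as `t → ∞`. -/
theorem stmt_9 (n : ℕ) (hn : 0 < n) (a : Fin n → ℝ) (ha : ∀ i, 1 < a i)
    (hsum : ∑ i, 1 / a i = 1) :
    ∃ C : ℝ, ∃ t₀ : ℝ, ∀ t : ℝ, t₀ ≤ t →
      |Real.log ((Nat.multinomial Finset.univ fun i => ⌊t / a i⌋₊ : ℕ) : ℝ) -
          t * (∑ i, Real.log (a i) / a i) + ((n : ℝ) - 1) / 2 * Real.log t| ≤ C := by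
  obtain ⟨Cs, hCs⟩ := stirlingE
  have ha0 : ∀ i, 0 < a i := fun i => lt_trans one_pos (ha i)
  have hla0 : ∀ i, 0 ≤ Real.log (a i) := fun i => Real.log_nonneg (le_of_lt (ha i))
  refine ⟨(Cs + 2*n) + ∑ i, (Cs + 2 * Real.log (a i) + 2), 1 + ∑ i, a i, fun t ht => ?_⟩
  have hta : ∀ i, a i ≤ t := by
    intro i
    have : a i ≤ ∑ j, a j :=
      Finset.single_le_sum (fun j _ => le_of_lt (ha0 j)) (Finset.mem_univ i)
    linarith
  have ht1 : (1:ℝ) ≤ t := by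
    have : (0:ℝ) ≤ ∑ i, a i := Finset.sum_nonneg fun i _ => le_of_lt (ha0 i)
    linarith
  have ht0 : (0:ℝ) < t := lt_of_lt_of_le one_pos ht1
  set x : Fin n → ℝ := fun i => t / a i with hxdef
  set k : Fin n → ℕ := fun i => ⌊x i⌋₊ with hkdef
  have hx1 : ∀ i, 1 ≤ x i := fun i => (one_le_div (ha0 i)).mpr (hta i)
  have hx0 : ∀ i, 0 < x i := fun i => lt_of_lt_of_le one_pos (hx1 i)
  have hk1 : ∀ i, 1 ≤ k i := fun i => Nat.le_floor (by exact_mod_cast hx1 i)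
  have hk0 : ∀ i, (0:ℝ) < k i := fun i => by exact_mod_cast hk1 i
  have hkx : ∀ i, (k i : ℝ) ≤ x i := fun i => Nat.floor_le (le_of_lt (hx0 i))
  have hxk : ∀ i, x i - k i < 1 := fun i => by
    have := Nat.lt_floor_add_one (x i); linarith
  set K : ℕ := ∑ i, k i with hKdef
  have hKcast : (K:ℝ) = ∑ i, (k i : ℝ) := by exact_mod_cast Nat.cast_sum univ k
  have hK1 : 1 ≤ K := by
    calc 1 ≤ n := hn
    _ = ∑ _i : Fin n, 1 := by simp
    _ ≤ K := Finset.sum_le_sum fun i _ => hk1 i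
  have hK0 : (0:ℝ) < K := by exact_mod_cast hK1
  have hxt : ∑ i, x i = t := by
    have : ∑ i, x i = t * ∑ i, 1 / a i := by
      rw [Finset.mul_sum]; exact Finset.sum_congr rfl fun i _ => by
        simp only [hxdef]; ring
    rw [this, hsum, mul_one]
  have hKt : (K:ℝ) ≤ t := by
    rw [hKcast, ← hxt]; exact Finset.sum_le_sum fun i _ => hkx i
  have htK : t - K < n := by
    rw [hKcast, ← hxt, ← Finset.sum_sub_distrib]
    calc ∑ i, (x i - k i) < ∑ _i : Fin n, (1:ℝ) :=
        Finset.sum_lt_sum_of_nonempty (univ_nonempty_iff.mpr ⟨⟨0, hn⟩⟩) fun i _ => hxk i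
    _ = n := by simp
  -- log of multinomial
  have hlogN : Real.log ((Nat.multinomial Finset.univ k : ℕ) : ℝ)
      = Real.log (K.factorial : ℝ) - ∑ i, Real.log ((k i).factorial : ℝ) := by
    have hspec := Nat.multinomial_spec (Finset.univ) k
    have hprodne : (∏ i, ((k i).factorial : ℝ)) ≠ 0 := by positivity
    have hNd : ((Nat.multinomial Finset.univ k : ℕ) : ℝ)
        = (K.factorial : ℝ) / ∏ i, ((k i).factorial : ℝ) := by
      rw [eq_div_iff hprodne, mul_comm]
      exact_mod_cast congrArg (fun m : ℕ => (m:ℝ)) hspec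
    rw [hNd, Real.log_div (by positivity) hprodne,
      Real.log_prod fun i _ => by positivity]
  have hts : t * (∑ i, Real.log (a i) / a i) = ∑ i, x i * Real.log (a i) := by
    rw [Finset.mul_sum]
    exact Finset.sum_congr rfl fun i _ => by simp only [hxdef]; ring
  set d : Fin n → ℝ := fun i => -Real.log ((k i).factorial : ℝ) - (k i : ℝ)
      - x i * Real.log (a i) + (k i : ℝ) * Real.log t + Real.log t / 2 with hddef
  set GK : ℝ := Real.log (K.factorial : ℝ) - (K:ℝ) * Real.log t + (K:ℝ) - Real.log t / 2
    with hGKdef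
  have hmain : Real.log ((Nat.multinomial Finset.univ k : ℕ) : ℝ) -
      t * (∑ i, Real.log (a i) / a i) + ((n : ℝ) - 1) / 2 * Real.log t
      = GK + ∑ i, d i := by
    have hsumd : ∑ i, d i = -(∑ i, Real.log ((k i).factorial : ℝ)) - (K:ℝ)
        - (∑ i, x i * Real.log (a i)) + (K:ℝ) * Real.log t + n * (Real.log t / 2) := by
      rw [hKcast, Finset.sum_mul]
      simp only [hddef, Finset.sum_add_distrib, Finset.sum_sub_distrib,
        Finset.sum_neg_distrib, Finset.sum_const, Finset.card_univ, Fintype.card_fin,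
        nsmul_eq_mul]
    rw [hlogN, hts, hsumd, hGKdef]; ring
  rw [hmain]
  -- bound GK
  have hlogtK0 : 0 ≤ Real.log t - Real.log K := by
    have := Real.log_le_log hK0 hKt; linarith
  have hlogtK : Real.log t - Real.log K ≤ (t - K) / K := log_sub_log_le hK0 hKt
  have hGKbound : |GK| ≤ Cs + 2 * n := by
    have hEK := hCs K hK1
    have hGKeq : GK = (Real.log (K.factorial : ℝ) -
        ((K:ℝ) * Real.log K - K + Real.log K / 2))
        - (K:ℝ) * (Real.log t - Real.log K) - (Real.log t - Real.log K) / 2 := by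
      rw [hGKdef]; ring
    have hb1 : (K:ℝ) * (Real.log t - Real.log K) ≤ t - K := by
      have := mul_le_mul_of_nonneg_left hlogtK (le_of_lt hK0)
      rwa [mul_div_cancel₀ _ (ne_of_gt hK0)] at this
    have hb2 : (Real.log t - Real.log K) ≤ t - K := by
      have hK1' : (1:ℝ) ≤ K := by exact_mod_cast hK1
      calc Real.log t - Real.log K ≤ (t - K) / K := hlogtK
        _ ≤ (t - K) / 1 := by
            apply div_le_div_of_nonneg_left (by linarith) one_pos hK1'
        _ = t - K := div_one _
    have hb3 : 0 ≤ (K:ℝ) * (Real.log t - Real.log K) :=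
      mul_nonneg (le_of_lt hK0) hlogtK0
    rw [hGKeq]
    have habs := abs_le.mp hEK
    rw [abs_le]
    constructor <;> nlinarith [htK, hlogtK0]
  -- bound each d i
  have hdbound : ∀ i, |d i| ≤ Cs + 2 * Real.log (a i) + 2 := by
    intro i
    have hEi := hCs (k i) (hk1 i)
    have hlx : Real.log (x i) = Real.log t - Real.log (a i) := by
      rw [hxdef]; exact Real.log_div (ne_of_gt ht0) (ne_of_gt (ha0 i))
    have hdeq : d i = -(Real.log ((k i).factorial : ℝ) -
        ((k i:ℝ) * Real.log (k i) - (k i:ℝ) + Real.log (k i) / 2))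
        - (x i - k i) * Real.log (a i)
        - (k i:ℝ) * (Real.log (k i) - Real.log (x i))
        - (Real.log (k i) - Real.log (x i)) / 2
        + Real.log (a i) / 2 := by
      rw [hddef]
      simp only
      rw [hlx]; ring
    have hlxk0 : 0 ≤ Real.log (x i) - Real.log (k i) := by
      have := Real.log_le_log (hk0 i) (hkx i); linarith
    have hlxk : Real.log (x i) - Real.log (k i) ≤ (x i - k i) / k i :=
      log_sub_log_le (hk0 i) (hkx i)
    have hkik : (1:ℝ) ≤ k i := by exact_mod_cast hk1 i
    have hb1 : (k i:ℝ) * (Real.log (x i) - Real.log (k i)) ≤ x i - k i := by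
      have := mul_le_mul_of_nonneg_left hlxk (le_of_lt (hk0 i))
      rwa [mul_div_cancel₀ _ (ne_of_gt (hk0 i))] at this
    have hb2 : Real.log (x i) - Real.log (k i) ≤ x i - (k i:ℝ) := by
      calc Real.log (x i) - Real.log (k i) ≤ (x i - k i) / k i := hlxk
        _ ≤ (x i - k i) / 1 := by
            apply div_le_div_of_nonneg_left (by linarith [hkx i]) one_pos hkik
        _ = x i - k i := div_one _
    have hb3 : 0 ≤ (x i - k i) * Real.log (a i) :=
      mul_nonneg (by linarith [hkx i]) (hla0 i)
    have hb4 : (x i - k i) * Real.log (a i) ≤ Real.log (a i) := by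
      nlinarith [hxk i, hla0 i, hkx i]
    have habs := abs_le.mp hEi
    rw [hdeq, abs_le]
    constructor <;> nlinarith [hxk i, hkx i, hlxk0, hla0 i,
      mul_nonneg (le_of_lt (hk0 i)) hlxk0]
  calc |GK + ∑ i, d i| ≤ |GK| + |∑ i, d i| := abs_add_le _ _
    _ ≤ |GK| + ∑ i, |d i| := by gcongr; exact Finset.abs_sum_le_sum_abs _ _
    _ ≤ (Cs + 2*n) + ∑ i, (Cs + 2 * Real.log (a i) + 2) := by
        gcongr with i
        exact hdbound i
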